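/- Generalized spatial integration-by-parts: let g : ℝ → ℂ be C¹ with g(x)h_k(x) → 0 and g'(x)h_k(x) → 0 as |x| → ∞ for all k, and let ξ, η, α, β ∈ ℕ. Then 2(ξ − η)·∫ g(x) h_{ξ+α}(x) h_{η+β}(x) dx = ∫ g'(x)[ h_{ξ+α}'(x) h_{η+β}(x) − h_{ξ+α}(x) h_{η+β}'(x) ] dx + 2(β − α)·∫ g(x) h_{ξ+α}(x) h_{η+β}(x) dx. -/

import Mathlib

open Real

/-- Physicists' Hermite polynomial. -/
noncomputable def H (k : ℕ) (t : ℝ) : ℝ :=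
  (-1 : ℝ) ^ k * Real.exp (t ^ 2) * iteratedDeriv k (fun s : ℝ => Real.exp (-s ^ 2)) t

/-- Hermite function. -/
noncomputable def h (k : ℕ) (t : ℝ) : ℝ :=
  ((2 : ℝ) ^ k * (Nat.factorial k : ℝ) * Real.sqrt Real.pi) ^ (-(1 : ℝ) / 2)
    * H k t * Real.exp (-t ^ 2 / 2)

open MeasureTheory Filter Polynomial

noncomputable def HP : ℕ → Polynomial ℝ
  | 0 => 1
  | (k+1) => C 2 * X * HP k - derivative (HP k)

lemma hdg1 (p : Polynomial ℝ) (t : ℝ) :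
    HasDerivAt (fun t : ℝ => p.eval t * Real.exp (-t ^ 2))
      ((derivative p - C 2 * X * p).eval t * Real.exp (-t ^ 2)) t := by
  have h1 : HasDerivAt (fun t : ℝ => -t ^ 2) (-(2 * t)) t := by
    simpa using (hasDerivAt_pow 2 t).fun_neg
  have := (p.hasDerivAt t).fun_mul h1.exp
  refine this.congr_deriv ?_
  simp only [eval_sub, eval_mul, eval_C, eval_X]
  ring

lemma hdg2 (p : Polynomial ℝ) (t : ℝ) :
    HasDerivAt (fun t : ℝ => p.eval t * Real.exp (-t ^ 2 / 2))
      ((derivative p - X * p).eval t * Real.exp (-t ^ 2 / 2)) t := by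
  have h1 : HasDerivAt (fun t : ℝ => -t ^ 2 / 2) (-t) t := by
    have := ((hasDerivAt_pow 2 t).neg).div_const 2
    simpa using this.congr_deriv (by ring)
  have := (p.hasDerivAt t).fun_mul h1.exp
  refine this.congr_deriv ?_
  simp only [eval_sub, eval_mul, eval_X]
  ring

lemma gaussIter (k : ℕ) :
    iteratedDeriv k (fun s : ℝ => Real.exp (-s ^ 2))
      = fun t => ((-1 : ℝ) ^ k * (HP k).eval t) * Real.exp (-t ^ 2) := by
  induction k with
  | zero => simp [HP]
  | succ k ih =>
      rw [iteratedDeriv_succ, ih]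
      funext t
      have h1 := hdg1 (C ((-1 : ℝ) ^ k) * HP k) t
      have h2 : (fun t : ℝ => ((C ((-1 : ℝ) ^ k) * HP k).eval t) * Real.exp (-t ^ 2))
          = fun t => ((-1 : ℝ) ^ k * (HP k).eval t) * Real.exp (-t ^ 2) := by
        funext s; simp
      rw [h2] at h1
      rw [h1.deriv]
      show (derivative (C ((-1:ℝ)^k) * HP k) - C 2 * X * (C ((-1:ℝ)^k) * HP k)).eval t * _ = _
      simp only [derivative_C_mul, eval_sub, eval_mul, eval_C, eval_X, HP, pow_succ]
      ring

lemma H_eq (k : ℕ) (t : ℝ) : H k t = (HP k).eval t := by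
  rw [H, gaussIter k]
  have : Real.exp (t ^ 2) * Real.exp (-t ^ 2) = 1 := by
    rw [← Real.exp_add]; simp
  have h2 : ((-1 : ℝ) ^ k) * ((-1 : ℝ) ^ k) = 1 := by
    rw [← mul_pow]; norm_num
  calc (-1 : ℝ) ^ k * Real.exp (t ^ 2) * (((-1 : ℝ) ^ k * (HP k).eval t) * Real.exp (-t ^ 2))
      = ((-1:ℝ)^k * (-1:ℝ)^k) * (Real.exp (t^2) * Real.exp (-t^2)) * (HP k).eval t := by ring
    _ = (HP k).eval t := by rw [this, h2]; ring

lemma HP_deriv (k : ℕ) : derivative (HP k) = C ((2:ℝ) * k) * HP (k - 1) ∧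
    derivative (HP (k+1)) = C ((2:ℝ) * (k+1)) * HP k := by
  induction k with
  | zero =>
      constructor
      · simp [HP]
      · show derivative (C 2 * X * HP 0 - derivative (HP 0)) = _
        simp [HP]
  | succ k ih =>
      obtain ⟨ih1, ih2⟩ := ih
      refine ⟨by simpa using ih2, ?_⟩
      show derivative (C 2 * X * HP (k+1) - derivative (HP (k+1))) = _
      have hk1 : HP (k+1) = C 2 * X * HP k - C ((2:ℝ) * k) * HP (k-1) := by
        show C 2 * X * HP k - derivative (HP k) = _
        rw [ih1]
      rw [derivative_sub, derivative_mul, derivative_mul, derivative_C, derivative_X, ih2,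
        derivative_mul, derivative_C, ih1]
      rw [hk1]
      push_cast
      simp only [map_add, map_mul, map_one, map_ofNat]
      ring

lemma HP_ode (k : ℕ) : derivative (derivative (HP k))
    = C 2 * X * derivative (HP k) - C (2 * (k:ℝ)) * HP k := by
  cases k with
  | zero => simp [HP]
  | succ k =>
      have h1 := (HP_deriv k).2
      have h2 : derivative (HP (k+1+1)) = C ((2:ℝ) * (k+1+1)) * HP (k+1) := by
        simpa using (HP_deriv (k+1)).2
      have h3 : HP (k+2) = C 2 * X * HP (k+1) - derivative (HP (k+1)) := rfl
      have := h2
      rw [h3, derivative_sub, derivative_mul, derivative_mul, derivative_C, derivative_X] at this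
      have h4 : derivative (derivative (HP (k+1)))
          = C 2 * HP (k+1) + C 2 * X * derivative (HP (k+1)) - C ((2:ℝ)*(k+1+1)) * HP (k+1) := by
        linear_combination -this
      rw [h4]
      push_cast
      simp only [map_add, map_mul, map_one, map_ofNat]
      ring

lemma tendsto_polyGauss_atTop (p : Polynomial ℝ) {b : ℝ} (hb : 0 < b) :
    Tendsto (fun t : ℝ => p.eval t * Real.exp (-(b * t ^ 2))) atTop (nhds 0) := by
  refine squeeze_zero_norm' (a := fun t => |p.eval t / Real.exp t|) ?_ ?_
  · filter_upwards [eventually_ge_atTop (1/b), eventually_ge_atTop 1] with t h1 h2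
    have hbt : t ≤ b * t ^ 2 := by
      have : 1 ≤ b * t := by
        rw [div_le_iff₀ hb] at h1
        linarith [h1]
      nlinarith
    have : Real.exp (-(b * t ^ 2)) ≤ Real.exp (-t) := by
      apply Real.exp_le_exp.2; linarith
    rw [norm_mul, Real.norm_eq_abs, Real.norm_eq_abs, abs_of_pos (Real.exp_pos _),
      abs_div, abs_of_pos (Real.exp_pos _), div_eq_mul_inv, ← Real.exp_neg]
    exact mul_le_mul_of_nonneg_left this (abs_nonneg _)
  · simpa using (p.tendsto_div_exp_atTop).abs

lemma tendsto_polyGauss (p : Polynomial ℝ) {b : ℝ} (hb : 0 < b) :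
    Tendsto (fun t : ℝ => p.eval t * Real.exp (-(b * t ^ 2))) (cocompact ℝ) (nhds 0) := by
  rw [cocompact_eq_atBot_atTop, tendsto_sup]
  constructor
  · have := (tendsto_polyGauss_atTop (p.comp (-X)) hb).comp tendsto_neg_atBot_atTop
    apply this.congr
    intro t
    simp [Function.comp, eval_comp]
  · exact tendsto_polyGauss_atTop p hb

lemma bdd_of_tendsto {E : Type*} [NormedAddCommGroup E] {f : ℝ → E} (hc : Continuous f)
    (hf : Tendsto f (cocompact ℝ) (nhds 0)) : ∃ C, ∀ x, ‖f x‖ ≤ C := by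
  have h1 : {x : ℝ | f x ∈ Metric.closedBall 0 1} ∈ cocompact ℝ :=
    hf (Metric.closedBall_mem_nhds 0 one_pos)
  rw [Filter.mem_cocompact] at h1
  obtain ⟨K, hK, hKs⟩ := h1
  obtain ⟨C, hC⟩ := hK.exists_bound_of_continuousOn hc.continuousOn
  refine ⟨max C 1, fun x => ?_⟩
  by_cases hx : x ∈ K
  · exact le_max_of_le_left (hC x hx)
  · refine le_max_of_le_right ?_
    have := hKs hx
    simpa [dist_zero_right] using this
  
lemma exp_half_sq_eq (x : ℝ) :
    Real.exp (-x ^ 2 / 2) = Real.exp (-((1/4) * x ^ 2)) * Real.exp (-((1/4) * x ^ 2)) := by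
  rw [← Real.exp_add]; ring_nf

lemma integrable_polyGauss (p : Polynomial ℝ) :
    Integrable (fun x : ℝ => p.eval x * Real.exp (-x ^ 2 / 2)) := by
  have hcont : Continuous fun x : ℝ => p.eval x * Real.exp (-((1/4) * x ^ 2)) := by
    apply p.continuous.mul
    exact Real.continuous_exp.comp (by continuity)
  obtain ⟨C, hC⟩ := bdd_of_tendsto hcont (tendsto_polyGauss p (by norm_num : (0:ℝ) < 1/4))
  apply Integrable.mono' (((integrable_exp_neg_mul_sq (by norm_num : (0:ℝ) < 1/4)).const_mul C))
  · exact (p.continuous.mul (Real.continuous_exp.comp (by continuity))).aestronglyMeasurable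
  · refine Filter.Eventually.of_forall fun x => ?_
    have key : ‖p.eval x * Real.exp (-x ^ 2 / 2)‖
        = ‖p.eval x * Real.exp (-((1/4) * x ^ 2))‖ * Real.exp (-((1/4) * x ^ 2)) := by
      rw [exp_half_sq_eq, Real.norm_eq_abs, Real.norm_eq_abs, abs_mul, abs_mul, abs_mul,
        abs_of_pos (Real.exp_pos (-(1/4 * x ^ 2)))]
      ring
    have h2 : -(1/4 : ℝ) * x ^ 2 = -((1/4 : ℝ) * x ^ 2) := by ring
    rw [key, h2]
    exact mul_le_mul_of_nonneg_right (hC x) (Real.exp_pos _).le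

/-- normalization constant -/
noncomputable def cst (k : ℕ) : ℝ :=
  ((2 : ℝ) ^ k * (Nat.factorial k : ℝ) * Real.sqrt Real.pi) ^ (-(1 : ℝ) / 2)

noncomputable def hP (k : ℕ) : Polynomial ℝ := C (cst k) * HP k

lemma h_eq (k : ℕ) : h k = fun t => (hP k).eval t * Real.exp (-t ^ 2 / 2) := by
  funext t
  rw [h, H_eq, hP, eval_mul, eval_C, cst, mul_assoc]

/-- derivative of the Hermite function -/
noncomputable def hD (k : ℕ) : ℝ → ℝ :=
  fun t => (derivative (hP k) - X * hP k).eval t * Real.exp (-t ^ 2 / 2)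

lemma h_hasDerivAt (k : ℕ) (t : ℝ) : HasDerivAt (h k) (hD k t) t := by
  rw [h_eq]; exact hdg2 _ t

lemma deriv_h (k : ℕ) : deriv (h k) = hD k :=
  funext fun t => (h_hasDerivAt k t).deriv

lemma hP_ode (k : ℕ) : derivative (derivative (hP k) - X * hP k)
    - X * (derivative (hP k) - X * hP k) = (X ^ 2 - C (2 * (k:ℝ) + 1)) * hP k := by
  have h1 : derivative (derivative (hP k))
      = C 2 * X * derivative (hP k) - C (2 * (k:ℝ)) * (C (cst k)) * HP k := by
    rw [hP, derivative_C_mul, derivative_C_mul, HP_ode]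
    ring
  rw [derivative_sub, derivative_mul, derivative_X, h1]
  have h2 : C (2 * (k:ℝ)) * C (cst k) * HP k = C (2 * (k:ℝ)) * hP k := by
    rw [hP]; ring
  rw [h2]
  simp only [map_add, map_mul, map_one, map_ofNat]
  ring

lemma hD_hasDerivAt (k : ℕ) (t : ℝ) :
    HasDerivAt (hD k) ((t ^ 2 - (2 * k + 1)) * h k t) t := by
  have := hdg2 (derivative (hP k) - X * hP k) t
  rw [hP_ode] at this
  convert this using 1
  · rfl
  rw [h_eq]
  simp only [eval_mul, eval_sub, eval_pow, eval_X, eval_C, eval_add, eval_one]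
  ring

lemma integrable_h (k : ℕ) : Integrable (h k) := by
  rw [h_eq]; exact integrable_polyGauss _

lemma integrable_hD (k : ℕ) : Integrable (hD k) := integrable_polyGauss _

lemma poly_gauss_half_tendsto (p : Polynomial ℝ) :
    Tendsto (fun t : ℝ => p.eval t * Real.exp (-t ^ 2 / 2)) (cocompact ℝ) (nhds 0) := by
  have := tendsto_polyGauss p (by norm_num : (0:ℝ) < 1/2)
  apply this.congr
  intro t
  norm_num [neg_div]
  left
  ring_nf

lemma tendsto_h (k : ℕ) : Tendsto (h k) (cocompact ℝ) (nhds 0) := by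
  rw [h_eq]; exact poly_gauss_half_tendsto _

lemma tendsto_hD (k : ℕ) : Tendsto (hD k) (cocompact ℝ) (nhds 0) :=
  poly_gauss_half_tendsto _

lemma continuous_h (k : ℕ) : Continuous (h k) := by
  rw [h_eq]
  exact (Polynomial.continuous _).mul (Real.continuous_exp.comp (by continuity))

lemma continuous_hD (k : ℕ) : Continuous (hD k) :=
  (Polynomial.continuous _).mul (Real.continuous_exp.comp (by continuity))

lemma key (g : ℝ → ℂ) (hg : ContDiff ℝ 1 g)
    (hdecay : ∀ k : ℕ, Tendsto (fun x => g x * (h k x : ℂ)) (cocompact ℝ) (nhds 0))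
    (hdecay' : ∀ k : ℕ, Tendsto (fun x => deriv g x * (h k x : ℂ)) (cocompact ℝ) (nhds 0))
    (m n : ℕ) :
    (∫ x : ℝ, deriv g x * ((hD m x : ℂ) * (h n x : ℂ) - (h m x : ℂ) * (hD n x : ℂ)))
      = 2 * ((m : ℂ) - (n : ℂ)) * ∫ x : ℝ, g x * (h m x : ℂ) * (h n x : ℂ) := by
  have hgd : Differentiable ℝ g := hg.differentiable one_ne_zero
  have hgc : Continuous g := hg.continuous
  have hg'c : Continuous (deriv g) := hg.continuous_deriv le_rfl
  set W : ℝ → ℝ := fun x => hD m x * h n x - h m x * hD n x with hW_def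
  have hW : ∀ x : ℝ, HasDerivAt W ((2 * (n:ℝ) - 2 * m) * (h m x * h n x)) x := by
    intro x
    have h1 := (hD_hasDerivAt m x).fun_mul (h_hasDerivAt n x)
    have h2 := (h_hasDerivAt m x).fun_mul (hD_hasDerivAt n x)
    have h3 := h1.fun_sub h2
    refine h3.congr_deriv ?_
    push_cast
    ring
  set F : ℝ → ℂ := fun x => g x * (W x : ℂ) with hF_def
  have hF : ∀ x : ℝ, HasDerivAt F (deriv g x * (W x : ℂ)
      + g x * (((2 * (n:ℝ) - 2 * m) * (h m x * h n x) : ℝ) : ℂ)) x := by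
    intro x
    exact ((hgd x).hasDerivAt).mul ((hW x).ofReal_comp)
  obtain ⟨C1, hC1⟩ := bdd_of_tendsto
    (hg'c.mul (Complex.continuous_ofReal.comp (continuous_h n))) (hdecay' n)
  obtain ⟨C2, hC2⟩ := bdd_of_tendsto
    (hg'c.mul (Complex.continuous_ofReal.comp (continuous_h m))) (hdecay' m)
  obtain ⟨C3, hC3⟩ := bdd_of_tendsto
    (hgc.mul (Complex.continuous_ofReal.comp (continuous_h m))) (hdecay m)
  have int1 : Integrable (fun x => (deriv g x * (h n x : ℂ)) * (hD m x : ℂ)) :=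
    (integrable_hD m).ofReal.bdd_mul
      ((hg'c.mul (Complex.continuous_ofReal.comp (continuous_h n))).aestronglyMeasurable)
      (Filter.Eventually.of_forall hC1)
  have int2 : Integrable (fun x => (deriv g x * (h m x : ℂ)) * (hD n x : ℂ)) :=
    (integrable_hD n).ofReal.bdd_mul
      ((hg'c.mul (Complex.continuous_ofReal.comp (continuous_h m))).aestronglyMeasurable)
      (Filter.Eventually.of_forall hC2)
  have intI : Integrable (fun x => g x * (h m x : ℂ) * (h n x : ℂ)) :=
    (integrable_h n).ofReal.bdd_mul
      ((hgc.mul (Complex.continuous_ofReal.comp (continuous_h m))).aestronglyMeasurable)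
      (Filter.Eventually.of_forall hC3)
  have intW : Integrable (fun x => deriv g x * (W x : ℂ)) := by
    have heq : (fun x => deriv g x * (W x : ℂ))
        = fun x => (deriv g x * (h n x : ℂ)) * (hD m x : ℂ)
            - (deriv g x * (h m x : ℂ)) * (hD n x : ℂ) := by
      funext x
      simp only [hW_def]
      push_cast
      ring
    rw [heq]
    exact int1.sub int2
  have intB : Integrable
      (fun x => g x * (((2 * (n:ℝ) - 2 * m) * (h m x * h n x) : ℝ) : ℂ)) := by
    have heq : (fun x => g x * (((2 * (n:ℝ) - 2 * m) * (h m x * h n x) : ℝ) : ℂ))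
        = fun x => ((2 * (n:ℝ) - 2 * m : ℝ) : ℂ) * (g x * (h m x : ℂ) * (h n x : ℂ)) := by
      funext x
      push_cast
      ring
    rw [heq]
    exact intI.const_mul _
  have TF : Tendsto F (cocompact ℝ) (nhds 0) := by
    have t1 : Tendsto (fun x => (g x * (h n x : ℂ)) * (hD m x : ℂ)) (cocompact ℝ) (nhds 0) := by
      have := (hdecay n).mul ((Complex.continuous_ofReal.tendsto 0).comp (tendsto_hD m))
      simpa using this
    have t2 : Tendsto (fun x => (g x * (h m x : ℂ)) * (hD n x : ℂ)) (cocompact ℝ) (nhds 0) := by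
      have := (hdecay m).mul ((Complex.continuous_ofReal.tendsto 0).comp (tendsto_hD n))
      simpa using this
    have t3 := t1.sub t2
    rw [sub_zero] at t3
    apply t3.congr
    intro x
    simp only [hF_def, hW_def]
    push_cast
    ring
  rw [cocompact_eq_atBot_atTop, tendsto_sup] at TF
  have hzero : (∫ x : ℝ, (deriv g x * (W x : ℂ)
      + g x * (((2 * (n:ℝ) - 2 * m) * (h m x * h n x) : ℝ) : ℂ))) = 0 := by
    rw [MeasureTheory.integral_of_hasDerivAt_of_tendsto hF (intW.add intB) TF.1 TF.2]
    simp
  rw [MeasureTheory.integral_add intW intB] at hzero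
  have hBval : (∫ x : ℝ, g x * (((2 * (n:ℝ) - 2 * m) * (h m x * h n x) : ℝ) : ℂ))
      = (2 * (n:ℂ) - 2 * m) * ∫ x : ℝ, g x * (h m x : ℂ) * (h n x : ℂ) := by
    rw [← MeasureTheory.integral_const_mul]
    congr 1
    funext x
    push_cast
    ring
  rw [hBval] at hzero
  have hLW : (∫ x : ℝ, deriv g x * ((hD m x : ℂ) * (h n x : ℂ) - (h m x : ℂ) * (hD n x : ℂ)))
      = ∫ x : ℝ, deriv g x * (W x : ℂ) := by
    congr 1
    funext x
    simp only [hW_def]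
    push_cast
    ring
  rw [hLW]
  linear_combination hzero

theorem spatial_integration_by_parts (g : ℝ → ℂ) (hg : ContDiff ℝ 1 g)
    (hdecay : ∀ k : ℕ, Tendsto (fun x => g x * (h k x : ℂ)) (cocompact ℝ) (nhds 0))
    (hdecay' : ∀ k : ℕ, Tendsto (fun x => deriv g x * (h k x : ℂ)) (cocompact ℝ) (nhds 0))
    (ξ η α β : ℕ) :
    2 * ((ξ : ℂ) - (η : ℂ)) * ∫ x : ℝ, g x * (h (ξ + α) x : ℂ) * (h (η + β) x : ℂ)
      = (∫ x : ℝ, deriv g x *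
            ((Complex.ofReal (deriv (h (ξ + α)) x)) * (h (η + β) x : ℂ)
              - (h (ξ + α) x : ℂ) * (Complex.ofReal (deriv (h (η + β)) x))))
        + 2 * ((β : ℂ) - (α : ℂ)) * ∫ x : ℝ, g x * (h (ξ + α) x : ℂ) * (h (η + β) x : ℂ) := by
  have hkey := key g hg hdecay hdecay' (ξ + α) (η + β)
  rw [deriv_h, deriv_h]
  rw [show (∫ x : ℝ, deriv g x *
      ((Complex.ofReal (hD (ξ + α) x)) * (h (η + β) x : ℂ)
        - (h (ξ + α) x : ℂ) * (Complex.ofReal (hD (η + β) x))))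
    = (∫ x : ℝ, deriv g x * ((hD (ξ + α) x : ℂ) * (h (η + β) x : ℂ)
        - (h (ξ + α) x : ℂ) * (hD (η + β) x : ℂ))) from rfl]
  rw [hkey]
  push_cast
  ring
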